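/- arXiv:0805.1211 — 3 statements merged into one kernel-verified Lean document; each statement's English description precedes it below -/
import Mathlib

section
/- Let n ≥ 1 and let a₀,…,aₙ be positive integers with gcd(a₀,…,aₙ) = 1. Let G = (ℤ/a₀ℤ) × ⋯ × (ℤ/aₙℤ) act on ℙⁿ(ℂ) by (k₀,…,kₙ) · [x₀ : ⋯ : xₙ] = [exp(2πi k₀/a₀)·x₀ : ⋯ : exp(2πi kₙ/aₙ)·xₙ]. Then the quotient topological space ℙⁿ(ℂ)/G is homeomorphic to the weighted projective space ℙ(a₀,…,aₙ). -/
/-- The weighted scalar equivalence on `ℂ^{n+1} \ {0}` with weights `a`. -/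
def wprojRel (n : ℕ) (a : Fin (n + 1) → ℕ) (x y : {v : Fin (n + 1) → ℂ // v ≠ 0}) : Prop :=
  ∃ t : ℂ, t ≠ 0 ∧ ∀ i, (y : Fin (n + 1) → ℂ) i = t ^ (a i) * (x : Fin (n + 1) → ℂ) i

/-- The weighted projective space `ℙ(a₀,…,aₙ)` as a quotient topological space. -/
def WProj (n : ℕ) (a : Fin (n + 1) → ℕ) : Type :=
  Quot (wprojRel n a)

instance (n : ℕ) (a : Fin (n + 1) → ℕ) : TopologicalSpace (WProj n a) :=
  inferInstanceAs (TopologicalSpace (Quot (wprojRel n a)))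

/-- Complex projective `n`-space `ℙⁿ(ℂ) = ℙ(1,…,1)`. -/
def ProjSpace (n : ℕ) : Type :=
  WProj n fun _ => 1

instance (n : ℕ) : TopologicalSpace (ProjSpace n) :=
  inferInstanceAs (TopologicalSpace (WProj n fun _ => 1))

/-- The action of `(k₀,…,kₙ) ∈ (ℤ/a₀ℤ) × ⋯ × (ℤ/aₙℤ)` on representatives:
`x i ↦ exp(2πi kᵢ/aᵢ) * x i`. -/
noncomputable def gActRep (n : ℕ) (a : Fin (n + 1) → ℕ) (k : ∀ i, ZMod (a i))
    (x : {v : Fin (n + 1) → ℂ // v ≠ 0}) : {v : Fin (n + 1) → ℂ // v ≠ 0} :=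
  ⟨fun i => Complex.exp (2 * Real.pi * Complex.I * ((k i).val : ℂ) / (a i : ℂ)) * x.1 i, by
    intro h
    apply x.2
    funext i
    have h1 := congrFun h i
    simp only [Pi.zero_apply] at h1 ⊢
    rcases mul_eq_zero.mp h1 with h2 | h2
    · exact absurd h2 (Complex.exp_ne_zero _)
    · exact h2⟩

/-- The orbit relation on `ℙⁿ(ℂ)` of the action of `G = (ℤ/a₀ℤ) × ⋯ × (ℤ/aₙℤ)`. -/
noncomputable def gOrbitRel (n : ℕ) (a : Fin (n + 1) → ℕ) (p q : ProjSpace n) : Prop :=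
  ∃ (k : ∀ i, ZMod (a i)) (x : {v : Fin (n + 1) → ℂ // v ≠ 0}),
    p = Quot.mk (wprojRel n fun _ => 1) x ∧
    q = Quot.mk (wprojRel n fun _ => 1) (gActRep n a k x)

open Complex Set

/-- Auxiliary: a vector is nonzero if it dominates a nonzero vector coordinatewise. -/
lemma aux_ne_zero {n : ℕ} {x : Fin (n + 1) → ℂ} (hx : x ≠ 0) {g : Fin (n + 1) → ℂ}
    (h : ∀ i, g i = 0 → x i = 0) : g ≠ 0 := by
  intro h0
  apply hx
  funext i
  have := congrFun h0 i
  simpa using h i (by simpa using this)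

lemma wprojRel_equivalence (n : ℕ) (a : Fin (n + 1) → ℕ) : Equivalence (wprojRel n a) := by
  constructor
  · intro x
    exact ⟨1, one_ne_zero, fun i => by simp⟩
  · rintro x y ⟨t, ht, h⟩
    refine ⟨t⁻¹, inv_ne_zero ht, fun i => ?_⟩
    rw [h i, ← mul_assoc, ← mul_pow, inv_mul_cancel₀ ht, one_pow, one_mul]
  · rintro x y z ⟨t, ht, h⟩ ⟨s, hs, h'⟩
    refine ⟨s * t, mul_ne_zero hs ht, fun i => ?_⟩
    rw [h' i, h i, mul_pow]; ring

lemma wproj_mk_eq (n : ℕ) (a : Fin (n + 1) → ℕ) (x y : {v : Fin (n + 1) → ℂ // v ≠ 0}) :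
    Quot.mk (wprojRel n a) x = Quot.mk (wprojRel n a) y ↔ wprojRel n a x y := by
  rw [Quot.eq, (wprojRel_equivalence n a).eqvGen_iff]

/-- Scaling by `t` with weights `a`, on nonzero vectors. -/
def wScale (n : ℕ) (a : Fin (n + 1) → ℕ) (t : {t : ℂ // t ≠ 0})
    (x : {v : Fin (n + 1) → ℂ // v ≠ 0}) : {v : Fin (n + 1) → ℂ // v ≠ 0} :=
  ⟨fun i => (t : ℂ) ^ (a i) * x.1 i, by
    refine aux_ne_zero x.2 fun i h => ?_
    rcases mul_eq_zero.mp h with h2 | h2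
    · exact absurd h2 (pow_ne_zero _ t.2)
    · exact h2⟩

lemma continuous_wScale (n : ℕ) (a : Fin (n + 1) → ℕ) (t : {t : ℂ // t ≠ 0}) :
    Continuous (wScale n a t) := by
  apply Continuous.subtype_mk
  exact continuous_pi fun i => continuous_const.mul ((continuous_apply i).comp continuous_subtype_val)

lemma isOpenMap_wproj_mk (n : ℕ) (a : Fin (n + 1) → ℕ) :
    IsOpenMap (Quot.mk (wprojRel n a)) := by
  intro U hU
  rw [isOpen_coinduced]
  have : Quot.mk (wprojRel n a) ⁻¹' (Quot.mk (wprojRel n a) '' U) =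
      ⋃ t : {t : ℂ // t ≠ 0}, wScale n a t ⁻¹' U := by
    ext x
    simp only [mem_preimage, mem_image, mem_iUnion]
    constructor
    · rintro ⟨y, hy, hxy⟩
      rcases (wproj_mk_eq n a x y).mp hxy.symm with ⟨t, ht, hrel⟩
      refine ⟨⟨t, ht⟩, ?_⟩
      have : wScale n a ⟨t, ht⟩ x = y := by
        apply Subtype.ext; funext i
        exact (hrel i).symm
      show wScale n a ⟨t, ht⟩ x ∈ U
      rw [this]; exact hy
    · rintro ⟨t, ht⟩
      refine ⟨wScale n a t x, ht, ?_⟩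
      symm
      rw [wproj_mk_eq]
      exact ⟨t, t.2, fun i => rfl⟩
  rw [this]
  exact isOpen_iUnion fun t => (continuous_wScale n a t).isOpen_preimage U hU

/-- The coordinatewise power map on nonzero vectors. -/
def wPow (n : ℕ) (a : Fin (n + 1) → ℕ) (ha : ∀ i, 0 < a i)
    (x : {v : Fin (n + 1) → ℂ // v ≠ 0}) : {v : Fin (n + 1) → ℂ // v ≠ 0} :=
  ⟨fun i => x.1 i ^ (a i), by
    refine aux_ne_zero x.2 fun i h => ?_
    exact pow_eq_zero_iff (ha i).ne' |>.mp h⟩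

lemma isOpenMap_cpow (m : ℕ) (hm : 0 < m) : IsOpenMap fun z : ℂ => z ^ m := by
  have h : AnalyticOnNhd ℂ (fun z : ℂ => z ^ m) univ := fun z _ => (analyticAt_id).pow m
  rcases h.is_constant_or_isOpen isPreconnected_univ with ⟨w, hw⟩ | h'
  · have h0 := hw 0 trivial
    have h1 := hw 1 trivial
    rw [zero_pow hm.ne'] at h0
    rw [one_pow] at h1
    exact absurd (h0.trans h1.symm) zero_ne_one
  · exact fun U hU => h' U (subset_univ U) hU

lemma isOpenMap_wPow (n : ℕ) (a : Fin (n + 1) → ℕ) (ha : ∀ i, 0 < a i) :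
    IsOpenMap (wPow n a ha) := by
  have hS : IsOpen {v : Fin (n + 1) → ℂ | v ≠ 0} := by
    show IsOpen ({(0 : Fin (n + 1) → ℂ)}ᶜ : Set _)
    exact isOpen_compl_singleton
  have hF : IsOpenMap fun v : Fin (n + 1) → ℂ => fun i => v i ^ a i := by
    have := IsOpenMap.piMap (f := fun i (z : ℂ) => z ^ a i)
      (fun i => isOpenMap_cpow (a i) (ha i))
      (Filter.Eventually.of_forall fun i z => IsAlgClosed.exists_pow_nat_eq z (ha i))
    exact this
  have hemb : Topology.IsOpenEmbedding
      (Subtype.val : {v : Fin (n + 1) → ℂ // v ≠ 0} → (Fin (n + 1) → ℂ)) :=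
    hS.isOpenEmbedding_subtypeVal
  intro U hU
  rw [hemb.isOpen_iff_image_isOpen]
  have himg : Subtype.val '' (wPow n a ha '' U) =
      (fun v : Fin (n + 1) → ℂ => fun i => v i ^ a i) '' (Subtype.val '' U) := by
    rw [Set.image_image, Set.image_image]
    rfl
  rw [himg]
  exact hF _ (hemb.isOpenMap U hU)

lemma continuous_wPow (n : ℕ) (a : Fin (n + 1) → ℕ) (ha : ∀ i, 0 < a i) :
    Continuous (wPow n a ha) := by
  apply Continuous.subtype_mk
  exact continuous_pi fun i => ((continuous_apply i).comp continuous_subtype_val).pow (a i)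

/-- For positive integers `a₀,…,aₙ` with `gcd(a₀,…,aₙ) = 1`, the quotient
of `ℙⁿ(ℂ)` by the coordinatewise action of `(ℤ/a₀ℤ) × ⋯ × (ℤ/aₙℤ)` by roots of unity is
homeomorphic to the weighted projective space `ℙ(a₀,…,aₙ)`. -/
theorem projSpace_quotient_homeomorph_wproj
    (n : ℕ) (hn : 1 ≤ n) (a : Fin (n + 1) → ℕ) (ha : ∀ i, 0 < a i)
    (hgcd : Finset.univ.gcd a = 1) :
    Nonempty (Quot (gOrbitRel n a) ≃ₜ WProj n a) := by
  have haC : ∀ i, (a i : ℂ) ≠ 0 := fun i => Nat.cast_ne_zero.mpr (ha i).ne'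
  set Φ := wPow n a ha with hΦdef
  have hexp : ∀ (i : Fin (n + 1)) (k : ∀ j, ZMod (a j)),
      Complex.exp (2 * Real.pi * Complex.I * ((k i).val : ℂ) / (a i : ℂ)) ^ (a i) = 1 := by
    intro i k
    rw [← Complex.exp_nat_mul, Complex.exp_eq_one_iff]
    refine ⟨((k i).val : ℤ), ?_⟩
    push_cast
    field_simp [haC i]
  have hw1 : ∀ x y, wprojRel n (fun _ => 1) x y →
      Quot.mk (wprojRel n a) (Φ x) = Quot.mk (wprojRel n a) (Φ y) := by
    rintro x y ⟨t, ht, h⟩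
    refine Quot.sound ⟨t, ht, fun i => ?_⟩
    show y.1 i ^ a i = t ^ a i * x.1 i ^ a i
    rw [h i, pow_one, mul_pow]
  let f1 : ProjSpace n → WProj n a := Quot.lift (fun x => Quot.mk (wprojRel n a) (Φ x)) hw1
  have hΦact : ∀ (k : ∀ j, ZMod (a j)) x, Φ (gActRep n a k x) = Φ x := by
    intro k x
    apply Subtype.ext; funext i
    show (Complex.exp _ * x.1 i) ^ a i = x.1 i ^ a i
    rw [mul_pow, hexp i k, one_mul]
  have hw2 : ∀ p q, gOrbitRel n a p q → f1 p = f1 q := by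
    rintro p q ⟨k, x, rfl, rfl⟩
    show Quot.mk (wprojRel n a) (Φ x) = Quot.mk (wprojRel n a) (Φ (gActRep n a k x))
    rw [hΦact]
  let F : Quot (gOrbitRel n a) → WProj n a := Quot.lift f1 hw2
  have hcont : Continuous F :=
    continuous_quot_lift _ (continuous_quot_lift _
      (continuous_quot_mk.comp (continuous_wPow n a ha)))
  have hinj : Function.Injective F := by
    intro p q
    induction p using Quot.ind with | mk p =>
    induction q using Quot.ind with | mk q =>
    induction p using Quot.ind with | mk x =>
    induction q using Quot.ind with | mk y =>
    intro h
    obtain ⟨t, ht, hrel⟩ := (wproj_mk_eq n a (Φ x) (Φ y)).mp h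
    have hz : ∀ i, ∃ m : ℕ, m < a i ∧
        y.1 i = Complex.exp (2 * Real.pi * Complex.I * (m : ℂ) / (a i : ℂ)) * (t * x.1 i) := by
      intro i
      have hri : y.1 i ^ a i = t ^ a i * x.1 i ^ a i := hrel i
      by_cases hx0 : x.1 i = 0
      · refine ⟨0, ha i, ?_⟩
        have hy0 : y.1 i ^ a i = 0 := by rw [hri, hx0, zero_pow (ha i).ne', mul_zero]
        rw [pow_eq_zero_iff (ha i).ne'] at hy0
        rw [hy0, hx0, mul_zero, mul_zero]
      · have hne : t * x.1 i ≠ 0 := mul_ne_zero ht hx0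
        have hζpow : (y.1 i / (t * x.1 i)) ^ a i = 1 := by
          rw [div_pow, mul_pow, hri]
          field_simp
        haveI : NeZero (a i) := ⟨(ha i).ne'⟩
        obtain ⟨m, hm, hme⟩ :=
          (Complex.isPrimitiveRoot_exp (a i) (ha i).ne').eq_pow_of_pow_eq_one hζpow
        refine ⟨m, hm, ?_⟩
        have hexpm : Complex.exp (2 * Real.pi * Complex.I * (m : ℂ) / (a i : ℂ)) =
            y.1 i / (t * x.1 i) := by
          rw [← hme, ← Complex.exp_nat_mul]
          congr 1
          ring
        rw [hexpm, div_mul_cancel₀ _ hne]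
    choose m hm1 hm2 using hz
    have hval : ∀ i, ((m i : ZMod (a i))).val = m i := by
      intro i
      haveI : NeZero (a i) := ⟨(ha i).ne'⟩
      exact ZMod.val_natCast_of_lt (hm1 i)
    apply Quot.sound
    refine ⟨fun i => (m i : ZMod (a i)), x, rfl, ?_⟩
    refine ((wproj_mk_eq n (fun _ => 1) _ _).mpr ⟨t, ht, fun i => ?_⟩).symm
    show y.1 i = t ^ 1 * (Complex.exp _ * x.1 i)
    rw [pow_one, hval i, hm2 i]
    ring
  have hsurj : Function.Surjective F := by
    intro w
    induction w using Quot.ind with | mk y =>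
    have hex : ∀ i, ∃ z : ℂ, z ^ a i = y.1 i := fun i =>
      IsAlgClosed.exists_pow_nat_eq _ (ha i)
    choose x hx using hex
    have hx0 : x ≠ 0 := by
      intro h0
      apply y.2
      funext i
      have h1 := congrFun h0 i
      simp only [Pi.zero_apply] at h1 ⊢
      rw [← hx i, h1, zero_pow (ha i).ne']
    refine ⟨Quot.mk _ (Quot.mk _ ⟨x, hx0⟩), ?_⟩
    show Quot.mk (wprojRel n a) (Φ ⟨x, hx0⟩) = Quot.mk (wprojRel n a) y
    congr 1
    exact Subtype.ext (funext hx)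
  have hopen : IsOpenMap F := by
    intro V hV
    have hmk2 : Function.Surjective
        (Quot.mk (gOrbitRel n a) ∘ Quot.mk (wprojRel n fun _ => 1)) :=
      Function.Surjective.comp (Quot.mk_surjective) (Quot.mk_surjective)
    have himg : F '' V = Quot.mk (wprojRel n a) ''
        (Φ '' ((Quot.mk (gOrbitRel n a) ∘ Quot.mk (wprojRel n fun _ => 1)) ⁻¹' V)) := by
      conv_lhs => rw [← Set.image_preimage_eq V hmk2]
      rw [← Set.image_comp, ← Set.image_comp]
      rfl
    rw [himg]
    exact isOpenMap_wproj_mk n a _ (isOpenMap_wPow n a ha _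
      (((continuous_quot_mk (X := ProjSpace n) (r := gOrbitRel n a)).comp
        (continuous_quot_mk (X := {v : Fin (n + 1) → ℂ // v ≠ 0}) (r := wprojRel n fun _ => 1))).isOpen_preimage V hV))
  exact ⟨(Equiv.ofBijective F ⟨hinj, hsurj⟩).toHomeomorphOfContinuousOpen hcont hopen⟩
end

section
/- Let n ≥ 1 and let a₀,…,aₙ be positive integers. Then the weighted projective space ℙ(a₀,…,aₙ), with its quotient topology, is simply connected. -/
namespace WProjAux

open unitInterval Set

section General

variable {T : Type*} [TopologicalSpace T] {x y : T}

def affI (u v : I) : I → I := fun t =>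
  ⟨(1 - t.1) * u.1 + t.1 * v.1, by
    obtain ⟨t, ht0, ht1⟩ := t; obtain ⟨u, hu0, hu1⟩ := u; obtain ⟨v, hv0, hv1⟩ := v
    constructor <;> simp only <;> nlinarith⟩

theorem continuous_affI (u v : I) : Continuous (affI u v) := by
  apply Continuous.subtype_mk
  fun_prop

@[simp] theorem affI_zero (u v : I) : affI u v 0 = u := by
  apply Subtype.ext; simp [affI]

@[simp] theorem affI_one (u v : I) : affI u v 1 = v := by
  apply Subtype.ext; simp [affI]

def subPath (p : Path x y) (u v : I) : Path (p u) (p v) where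
  toFun t := p (affI u v t)
  continuous_toFun := p.continuous.comp (continuous_affI u v)
  source' := congrArg p (affI_zero u v)
  target' := congrArg p (affI_one u v)

def headPath (p : Path x y) (v : I) : Path x (p v) where
  toFun t := p (affI 0 v t)
  continuous_toFun := p.continuous.comp (continuous_affI 0 v)
  source' := (congrArg p (affI_zero 0 v)).trans p.source
  target' := congrArg p (affI_one 0 v)

def lastPath (p : Path x y) (u : I) : Path (p u) y where
  toFun t := p (affI u 1 t)
  continuous_toFun := p.continuous.comp (continuous_affI u 1)
  source' := congrArg p (affI_zero u 1)
  target' := (congrArg p (affI_one u 1)).trans p.target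

@[simp] theorem subPath_apply (p : Path x y) (u v : I) (t : I) :
    subPath p u v t = p (affI u v t) := rfl
@[simp] theorem headPath_apply (p : Path x y) (v : I) (t : I) :
    headPath p v t = p (affI 0 v t) := rfl
@[simp] theorem lastPath_apply (p : Path x y) (u : I) (t : I) :
    lastPath p u t = p (affI u 1 t) := rfl

/-- raw reparametrization function for splitting `[u,w]` at `v`. -/
noncomputable def splitRaw (u v w : ℝ) (s : ℝ) : ℝ :=
  if s ≤ 1 / 2 then 2 * s * (v - u) / (w - u) else ((v - u) + (2 * s - 1) * (w - v)) / (w - u)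

theorem continuous_splitRaw (u v w : ℝ) : Continuous (splitRaw u v w) := by
  apply Continuous.if_le
  · fun_prop
  · fun_prop
  · fun_prop
  · fun_prop
  · intro s hs
    rw [hs]; ring_nf

noncomputable def splitFun (u v w : I) : I → I := fun t =>
  projIcc 0 1 zero_le_one (splitRaw u.1 v.1 w.1 t.1)

theorem continuous_splitFun (u v w : I) : Continuous (splitFun u v w) :=
  continuous_projIcc.comp ((continuous_splitRaw _ _ _).comp continuous_subtype_val)

theorem splitRaw_mem (u v w : I) (huv : u.1 ≤ v.1) (hvw : v.1 ≤ w.1) (huw : u.1 < w.1)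
    (t : I) : splitRaw u.1 v.1 w.1 t.1 ∈ Icc (0:ℝ) 1 := by
  obtain ⟨s, hs0, hs1⟩ := t
  have hd : (0:ℝ) < w.1 - u.1 := by linarith
  simp only [splitRaw]
  split_ifs with h
  · constructor
    · apply div_nonneg _ hd.le; nlinarith
    · rw [div_le_one hd]; nlinarith
  · push_neg at h
    constructor
    · apply div_nonneg _ hd.le; nlinarith
    · rw [div_le_one hd]; nlinarith

theorem splitFun_zero (u v w : I) : splitFun u v w 0 = 0 := by
  have h0 : splitRaw u.1 v.1 w.1 ((0:I):ℝ) = 0 := by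
    simp [splitRaw]
  simp only [splitFun, h0]
  exact projIcc_left _

theorem splitFun_one (u v w : I) (huw : u.1 < w.1) : splitFun u v w 1 = 1 := by
  have hd : w.1 - u.1 ≠ 0 := by linarith
  have : splitRaw u.1 v.1 w.1 1 = 1 := by
    simp only [splitRaw]
    rw [if_neg (by norm_num)]
    field_simp
    ring
  have h1 : splitRaw u.1 v.1 w.1 ((1:I):ℝ) = 1 := by
    simpa using this
  simp only [splitFun, h1]
  exact projIcc_right _

/-- the key splitting equality: restriction to `[u,w]` equals the concatenation of the
restrictions to `[u,v]` and `[v,w]`, up to reparametrization. -/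
theorem subPath_trans_eq (p : Path x y) (u v w : I) (huv : u.1 ≤ v.1) (hvw : v.1 ≤ w.1)
    (huw : u.1 < w.1) :
    (subPath p u v).trans (subPath p v w) =
      (subPath p u w).reparam (splitFun u v w) (continuous_splitFun u v w)
        (splitFun_zero u v w) (splitFun_one u v w huw) := by
  have hd : w.1 - u.1 ≠ 0 := by linarith
  ext t
  rw [Path.trans_apply]
  simp only [Path.coe_reparam, Function.comp_apply, subPath_apply]
  have hmem := splitRaw_mem u v w huv hvw huw t
  split_ifs with h
  · congr 1
    apply Subtype.ext
    simp only [affI, splitFun]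
    rw [projIcc_of_mem _ (by simpa [splitRaw, if_pos h] using hmem)]
    simp only [splitRaw, if_pos h]
    field_simp
    ring
  · congr 1
    apply Subtype.ext
    simp only [affI, splitFun]
    rw [projIcc_of_mem _ (by simpa [splitRaw, if_neg h] using hmem)]
    simp only [splitRaw, if_neg h]
    field_simp
    ring

theorem subPath_homotopic (p : Path x y) (u v w : I) (huv : u.1 ≤ v.1) (hvw : v.1 ≤ w.1)
    (huw : u.1 < w.1) :
    Path.Homotopic (subPath p u w) ((subPath p u v).trans (subPath p v w)) := by
  rw [subPath_trans_eq p u v w huv hvw huw]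
  exact ⟨Path.Homotopy.reparam _ _ _ _ _⟩


theorem headPath_trans_eq (p : Path x y) (v w : I) (hvw : v.1 ≤ w.1) (hw : (0:ℝ) < w.1) :
    (headPath p v).trans (subPath p v w) =
      (headPath p w).reparam (splitFun 0 v w) (continuous_splitFun 0 v w)
        (splitFun_zero 0 v w) (splitFun_one 0 v w hw) := by
  have hd : w.1 - (0:ℝ) ≠ 0 := by linarith
  ext t
  rw [Path.trans_apply]
  simp only [Path.coe_reparam, Function.comp_apply, headPath_apply, subPath_apply]
  have hmem := splitRaw_mem 0 v w (by exact_mod_cast v.2.1) hvw (by exact_mod_cast hw) t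
  rw [show ((0:I):ℝ) = (0:ℝ) from rfl] at hmem
  split_ifs with h
  · congr 1
    apply Subtype.ext
    simp only [affI, splitFun]
    rw [projIcc_of_mem _ (by simpa [splitRaw, if_pos h] using hmem)]
    simp only [splitRaw, if_pos h, Icc.coe_zero, sub_zero, mul_zero, zero_add]
    rw [div_mul_cancel₀ _ (by linarith : (w:ℝ) ≠ 0)]
  · congr 1
    apply Subtype.ext
    simp only [affI, splitFun]
    rw [projIcc_of_mem _ (by simpa [splitRaw, if_neg h] using hmem)]
    simp only [splitRaw, if_neg h, Icc.coe_zero, sub_zero, mul_zero, zero_add]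
    rw [div_mul_cancel₀ _ (by linarith : (w:ℝ) ≠ 0)]
    ring

theorem head_split (p : Path x y) (v w : I) (hvw : v.1 ≤ w.1) (hw : (0:ℝ) < w.1) :
    Path.Homotopic (headPath p w) ((headPath p v).trans (subPath p v w)) := by
  rw [headPath_trans_eq p v w hvw hw]
  exact ⟨Path.Homotopy.reparam _ _ _ _ _⟩

theorem full_trans_eq (p : Path x y) (v : I) :
    (headPath p v).trans (lastPath p v) =
      p.reparam (splitFun 0 v 1) (continuous_splitFun 0 v 1)
        (splitFun_zero 0 v 1) (splitFun_one 0 v 1 (by norm_num)) := by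
  ext t
  rw [Path.trans_apply]
  simp only [Path.coe_reparam, Function.comp_apply, headPath_apply, lastPath_apply]
  have hmem := splitRaw_mem 0 v 1 (by exact_mod_cast v.2.1) (by exact_mod_cast v.2.2)
    (by norm_num) t
  rw [show ((0:I):ℝ) = (0:ℝ) from rfl, show ((1:I):ℝ) = (1:ℝ) from rfl] at hmem
  split_ifs with h
  · congr 1
    apply Subtype.ext
    simp only [affI, splitFun]
    rw [projIcc_of_mem _ (by simpa [splitRaw, if_pos h] using hmem)]
    simp only [splitRaw, if_pos h, Icc.coe_zero, Icc.coe_one, sub_zero, div_one,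
      mul_zero, zero_add]
  · congr 1
    apply Subtype.ext
    simp only [affI, splitFun]
    rw [projIcc_of_mem _ (by simpa [splitRaw, if_neg h] using hmem)]
    simp only [splitRaw, if_neg h, Icc.coe_zero, Icc.coe_one, sub_zero, div_one,
      mul_zero, zero_add]
    ring

theorem full_split (p : Path x y) (v : I) :
    Path.Homotopic p ((headPath p v).trans (lastPath p v)) := by
  rw [full_trans_eq p v]
  exact ⟨Path.Homotopy.reparam _ _ _ _ _⟩

theorem trans_symm_cancel {z : T} (B : Path x y) (C : Path x z) :
    Path.Homotopic (B.trans (B.symm.trans C)) C := by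
  have h1 : Path.Homotopic (B.trans (B.symm.trans C)) ((B.trans B.symm).trans C) :=
    ⟨(Path.Homotopy.transAssoc B B.symm C).symm⟩
  have h2 : Path.Homotopic (B.trans B.symm) (Path.refl x) :=
    ⟨(Path.Homotopy.reflTransSymm B).symm⟩
  have h3 : Path.Homotopic ((B.trans B.symm).trans C) ((Path.refl x).trans C) :=
    Path.Homotopic.hcomp h2 (Path.Homotopic.refl C)
  have h4 : Path.Homotopic ((Path.refl x).trans C) C := ⟨Path.Homotopy.reflTrans C⟩
  exact (h1.trans h3).trans h4


end General


variable {n : ℕ} {a : Fin (n + 1) → ℕ}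

abbrev Xsp (n : ℕ) : Type := {v : Fin (n + 1) → ℂ // v ≠ 0}

def q (n : ℕ) (a : Fin (n + 1) → ℕ) : Xsp n → WProj n a := Quot.mk _

theorem wprojRel_equivalence (n : ℕ) (a : Fin (n + 1) → ℕ) :
    Equivalence (wprojRel n a) := by
  constructor
  · intro x; exact ⟨1, one_ne_zero, fun i => by simp⟩
  · rintro x y ⟨t, ht, h⟩
    refine ⟨t⁻¹, inv_ne_zero ht, fun i => ?_⟩
    rw [h i, ← mul_assoc, ← mul_pow, inv_mul_cancel₀ ht, one_pow, one_mul]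
  · rintro x y z ⟨t, ht, h⟩ ⟨s, hs, h'⟩
    refine ⟨s * t, mul_ne_zero hs ht, fun i => ?_⟩
    rw [h' i, h i, mul_pow]; ring

theorem q_eq_iff (x y : Xsp n) : q n a x = q n a y ↔ wprojRel n a x y := by
  rw [q]
  change (Quot.mk (wprojRel n a) x : Quot (wprojRel n a)) = Quot.mk _ y ↔ _
  rw [Quot.eq]
  exact ⟨fun h => (Equivalence.eqvGen_iff (wprojRel_equivalence n a)).1 h,
    fun h => Relation.EqvGen.rel _ _ h⟩

/-- scaling by `t ≠ 0`. -/
def scl (a : Fin (n + 1) → ℕ) (t : ℂ) (ht : t ≠ 0) (x : Xsp n) : Xsp n :=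
  ⟨fun i => t ^ (a i) * x.1 i, by
    intro h
    apply x.2
    funext i
    have := congrFun h i
    simp only [Pi.zero_apply] at this ⊢
    rcases mul_eq_zero.1 this with h' | h'
    · exact absurd h' (pow_ne_zero _ ht)
    · exact h'⟩

theorem q_scl (t : ℂ) (ht : t ≠ 0) (x : Xsp n) : q n a (scl a t ht x) = q n a x :=
  ((q_eq_iff _ _).2 ⟨t⁻¹, inv_ne_zero ht, fun i => by
    simp [scl]
    field_simp⟩)

theorem continuous_scl (t : ℂ) (ht : t ≠ 0) : Continuous (scl (n := n) a t ht) := by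
  apply Continuous.subtype_mk
  exact continuous_pi fun i => (continuous_const.mul ((continuous_apply i).comp continuous_subtype_val))

theorem isOpenQuotientMap_q : IsOpenQuotientMap (q n a) := by
  refine ⟨Quot.exists_rep, continuous_quot_mk, ?_⟩
  intro W hW
  change IsOpen (Quot.mk (wprojRel n a) ⁻¹' ((q n a) '' W))
  have : (q n a) ⁻¹' ((q n a) '' W) = ⋃ (t : ℂ) (ht : t ≠ 0), (scl a t ht) '' W := by
    ext x
    simp only [Set.mem_preimage, Set.mem_image, Set.mem_iUnion]
    constructor
    · rintro ⟨w, hw, hqw⟩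
      obtain ⟨t, ht, h⟩ := (q_eq_iff w x).1 hqw
      exact ⟨t, ht, w, hw, Subtype.ext (funext fun i => (h i).symm)⟩
    · rintro ⟨t, ht, w, hw, rfl⟩
      exact ⟨w, hw, (q_scl t ht w).symm⟩
  rw [show (Quot.mk (wprojRel n a)) ⁻¹' ((q n a) '' W) = (q n a) ⁻¹' ((q n a) '' W) from rfl, this]
  apply isOpen_iUnion; intro t; apply isOpen_iUnion; intro ht
  have : (scl (n := n) a t ht) '' W = (scl a t⁻¹ (inv_ne_zero ht)) ⁻¹' W := by
    ext x
    simp only [Set.mem_image, Set.mem_preimage]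
    constructor
    · rintro ⟨w, hw, rfl⟩
      convert hw
      apply Subtype.ext; funext i
      simp [scl]
      field_simp
    · intro hx
      refine ⟨_, hx, ?_⟩
      apply Subtype.ext; funext i
      simp [scl]
      field_simp
  rw [this]
  exact hW.preimage (continuous_scl _ _)

/-- the chart where coordinate `j` is nonzero -/
def U (n : ℕ) (a : Fin (n + 1) → ℕ) (j : Fin (n + 1)) : Set (WProj n a) :=
  q n a '' {x | x.1 j ≠ 0}

theorem mem_U {j : Fin (n + 1)} {x : Xsp n} : q n a x ∈ U n a j ↔ x.1 j ≠ 0 := by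
  constructor
  · rintro ⟨w, hw, hq⟩
    obtain ⟨t, ht, h⟩ := (q_eq_iff w x).1 hq
    rw [Set.mem_setOf_eq] at hw
    rw [h j]
    exact mul_ne_zero (pow_ne_zero _ ht) hw
  · intro hx
    exact ⟨x, hx, rfl⟩

theorem isOpen_U (j : Fin (n + 1)) : IsOpen (U n a j) := by
  apply isOpenQuotientMap_q.isOpenMap
  have : {x : Xsp n | x.1 j ≠ 0} = Subtype.val ⁻¹' {v : Fin (n + 1) → ℂ | v j ≠ 0} := rfl
  rw [this]
  exact (isOpen_ne.preimage (continuous_apply j)).preimage continuous_subtype_val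

/-- the all-ones basepoint -/
def onept (n : ℕ) : Xsp n :=
  ⟨fun _ => 1, fun h => one_ne_zero (congrFun h 0)⟩

def z0 (n : ℕ) (a : Fin (n + 1) → ℕ) : WProj n a := q n a (onept n)

theorem z0_mem_U (j : Fin (n + 1)) : z0 n a ∈ U n a j :=
  mem_U.2 one_ne_zero

/-- slice model for the chart -/
abbrev Ysp (n : ℕ) (j : Fin (n + 1)) : Type := {v : Fin (n + 1) → ℂ // v j ≠ 0}

def emb {j : Fin (n + 1)} (v : Ysp n j) : Xsp n :=
  ⟨v.1, fun h => v.2 (congrFun h j)⟩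

def rj (n : ℕ) (a : Fin (n + 1) → ℕ) (j : Fin (n + 1)) (v : Ysp n j) : ↥(U n a j) :=
  ⟨q n a (emb v), mem_U.2 v.2⟩

theorem continuous_rj : Continuous (rj n a j) := by
  apply Continuous.subtype_mk
  exact isOpenQuotientMap_q.continuous.comp (Continuous.subtype_mk continuous_subtype_val _)

theorem surjective_rj {j : Fin (n + 1)} : Function.Surjective (rj n a j) := by
  rintro ⟨y, hy⟩
  obtain ⟨x, hx, rfl⟩ := hy
  exact ⟨⟨x.1, hx⟩, Subtype.ext rfl⟩

theorem isOpenMap_rj {j : Fin (n + 1)} : IsOpenMap (rj n a j) := by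
  intro O hO
  obtain ⟨O₀, hO₀, rfl⟩ := isOpen_induced_iff.1 hO
  have key : IsOpen ((q n a) '' (Subtype.val ⁻¹' (O₀ ∩ {v | v j ≠ 0}) : Set (Xsp n))) := by
    apply isOpenQuotientMap_q.isOpenMap
    exact ((hO₀.inter (isOpen_ne.preimage (continuous_apply j))).preimage continuous_subtype_val)
  have : rj n a j '' (Subtype.val ⁻¹' O₀) =
      Subtype.val ⁻¹' ((q n a) '' (Subtype.val ⁻¹' (O₀ ∩ {v | v j ≠ 0}) : Set (Xsp n))) := by
    ext ⟨y, hy⟩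
    simp only [Set.mem_image, Set.mem_preimage]
    constructor
    · rintro ⟨v, hv, hr⟩
      exact ⟨emb v, ⟨hv, v.2⟩, congrArg Subtype.val hr⟩
    · rintro ⟨x, ⟨hx1, hx2⟩, hq⟩
      exact ⟨⟨x.1, hx2⟩, hx1, Subtype.ext (by simpa [rj, emb] using hq)⟩
  rw [this]
  exact key.preimage continuous_subtype_val

theorem isOpenQuotientMap_rj {j : Fin (n + 1)} : IsOpenQuotientMap (rj n a j) :=
  ⟨surjective_rj, continuous_rj, isOpenMap_rj⟩


/-- base vector of the chart -/
def ej (n : ℕ) (j : Fin (n + 1)) : Ysp n j :=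
  ⟨fun i => if i = j then 1 else 0, by simp⟩

/-- the scaling contraction on the slice -/
def Hhat (j : Fin (n + 1)) (p : unitInterval × Ysp n j) : Ysp n j :=
  ⟨fun i => if i = j then p.2.1 i else ((p.1 : ℝ) : ℂ) * p.2.1 i, by simpa using p.2.2⟩

theorem continuous_Hhat {j : Fin (n + 1)} : Continuous (Hhat (n := n) j) := by
  apply Continuous.subtype_mk
  apply continuous_pi
  intro i
  by_cases h : i = j
  · simp only [Hhat, h, if_true, if_pos]
    exact (continuous_apply j).comp (continuous_subtype_val.comp continuous_snd)
  · simp only [Hhat, if_neg h]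
    exact ((Complex.continuous_ofReal.comp (continuous_subtype_val.comp continuous_fst)).mul
      ((continuous_apply i).comp (continuous_subtype_val.comp continuous_snd)))

theorem rj_eq_of_rel {j : Fin (n + 1)} {v w : Ysp n j} {t : ℂ} (ht : t ≠ 0)
    (h : ∀ i, w.1 i = t ^ (a i) * v.1 i) : rj n a j v = rj n a j w :=
  Subtype.ext ((q_eq_iff _ _).2 ⟨t, ht, h⟩)

theorem rel_of_rj_eq {j : Fin (n + 1)} {v w : Ysp n j} (h : rj n a j v = rj n a j w) :
    ∃ t : ℂ, t ≠ 0 ∧ ∀ i, w.1 i = t ^ (a i) * v.1 i :=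
  (q_eq_iff _ _).1 (congrArg Subtype.val h)

/-- the contraction of the chart, descended to the quotient -/
noncomputable def Hmap (n : ℕ) (a : Fin (n + 1) → ℕ) (j : Fin (n + 1))
    (p : unitInterval × ↥(U n a j)) : ↥(U n a j) :=
  rj n a j (Hhat j (p.1, (surjective_rj (a := a) p.2).choose))

theorem Hmap_rj {j : Fin (n + 1)} (s : unitInterval) (v : Ysp n j) :
    Hmap n a j (s, rj n a j v) = rj n a j (Hhat j (s, v)) := by
  set w := (surjective_rj (a := a) (rj n a j v)).choose with hw
  have hspec : rj n a j w = rj n a j v := (surjective_rj (a := a) (rj n a j v)).choose_spec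
  obtain ⟨t, ht, h⟩ := rel_of_rj_eq hspec
  apply rj_eq_of_rel ht
  intro i
  by_cases hij : i = j
  · simp only [Hhat, hij, if_true, if_pos]
    exact h j
  · simp only [Hhat, if_neg hij]
    rw [h i]; ring

theorem continuous_Hmap {j : Fin (n + 1)} : Continuous (Hmap n a j) := by
  have hq : Topology.IsQuotientMap (Prod.map (id : unitInterval → unitInterval) (rj n a j)) := by
    apply IsOpenMap.isQuotientMap
    · exact IsOpenMap.id.prodMap isOpenMap_rj
    · exact continuous_id.prodMap continuous_rj
    · exact Function.Surjective.prodMap Function.surjective_id surjective_rj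
  rw [hq.continuous_iff]
  have : Hmap n a j ∘ Prod.map id (rj n a j) = (rj n a j) ∘ (Hhat j) := by
    funext p
    exact Hmap_rj p.1 p.2
  rw [this]
  exact continuous_rj.comp continuous_Hhat

theorem Hmap_one {j : Fin (n + 1)} (u : ↥(U n a j)) : Hmap n a j (1, u) = u := by
  obtain ⟨v, rfl⟩ := surjective_rj (a := a) u
  rw [Hmap_rj]
  congr 1
  apply Subtype.ext; funext i
  by_cases hij : i = j <;> simp [Hhat, hij]

theorem Hmap_zero {j : Fin (n + 1)} (haj : 0 < a j) (u : ↥(U n a j)) :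
    Hmap n a j (0, u) = rj n a j (ej n j) := by
  obtain ⟨v, rfl⟩ := surjective_rj (a := a) u
  rw [Hmap_rj]
  obtain ⟨t, ht⟩ := IsAlgClosed.exists_pow_nat_eq (k := ℂ) (v.1 j) haj
  have htne : t ≠ 0 := by
    intro h
    rw [h] at ht
    exact v.2 (by simpa [zero_pow haj.ne'] using ht.symm)
  apply (rj_eq_of_rel (t := t) htne _).symm
  intro i
  by_cases hij : i = j
  · simp only [Hhat, ej, hij, if_true, if_pos]
    rw [mul_one]; exact ht.symm
  · simp [Hhat, ej, if_neg hij]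

/-- The chart is contractible. -/
theorem contractibleSpace_U (j : Fin (n + 1)) (haj : 0 < a j) :
    ContractibleSpace ↥(U n a j) := by
  rw [contractible_iff_id_nullhomotopic]
  refine ⟨rj n a j (ej n j), ⟨?_⟩⟩
  exact
    { toFun := fun p => Hmap n a j (unitInterval.symm p.1, p.2)
      continuous_toFun := continuous_Hmap.comp
        ((unitInterval.continuous_symm.comp continuous_fst).prodMk continuous_snd)
      map_zero_left := fun u => by simpa using Hmap_one u
      map_one_left := fun u => by simpa using Hmap_zero haj u }


/-- Corestriction of a path to a subset it lies in. -/
def corestrict {T : Type*} [TopologicalSpace T] {x y : T} (S : Set T) (p : Path x y)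
    (h : ∀ t, p t ∈ S) (hx : x ∈ S) (hy : y ∈ S) : Path (⟨x, hx⟩ : S) (⟨y, hy⟩ : S) where
  toFun t := ⟨p t, h t⟩
  continuous_toFun := p.continuous.subtype_mk _
  source' := Subtype.ext p.source
  target' := Subtype.ext p.target

@[simp] theorem corestrict_map {T : Type*} [TopologicalSpace T] {x y : T} (S : Set T)
    (p : Path x y) (h : ∀ t, p t ∈ S) (hx : x ∈ S) (hy : y ∈ S) :
    (corestrict S p h hx hy).map continuous_subtype_val = p := by
  ext t; rfl

/-- exp/log path from the basepoint to any point, staying in every chart that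
contains the endpoint. -/
theorem exists_path_from_z0 (x : Xsp n) :
    ∃ p : Path (z0 n a) (q n a x), ∀ (t : unitInterval) (l : Fin (n + 1)),
      x.1 l ≠ 0 → p t ∈ U n a l := by
  classical
  have hvec : ∀ t : unitInterval, (fun i => if x.1 i = 0 then (1 - (t : ℝ) : ℂ)
      else Complex.exp ((t : ℝ) * Complex.log (x.1 i))) ≠ 0 := by
    intro t h
    obtain ⟨i, hi⟩ := Function.ne_iff.1 x.2
    rw [Pi.zero_apply] at hi
    have := congrFun h i
    rw [Pi.zero_apply, if_neg hi] at this
    exact Complex.exp_ne_zero _ this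
  set γ : unitInterval → Xsp n := fun t =>
    ⟨fun i => if x.1 i = 0 then (1 - (t : ℝ) : ℂ)
      else Complex.exp ((t : ℝ) * Complex.log (x.1 i)), hvec t⟩ with hγ
  have hcont : Continuous γ := by
    apply Continuous.subtype_mk
    apply continuous_pi
    intro i
    by_cases hi : x.1 i = 0
    · simp only [if_pos hi]
      fun_prop
    · simp only [if_neg hi]
      fun_prop
  have h0 : γ 0 = onept n := by
    apply Subtype.ext; funext i
    by_cases hi : x.1 i = 0 <;> simp [hγ, onept, hi]
  have h1 : γ 1 = x := by
    apply Subtype.ext; funext i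
    by_cases hi : x.1 i = 0 <;> simp [hγ, hi]
    exact Complex.exp_log hi
  refine ⟨⟨⟨fun t => q n a (γ t), (isOpenQuotientMap_q.continuous).comp hcont⟩,
      by simp [h0, z0], by simp [h1]⟩, ?_⟩
  intro t l hl
  show q n a (γ t) ∈ U n a l
  rw [mem_U]
  simp only [hγ, if_neg hl]
  exact Complex.exp_ne_zero _


theorem exists_chart (y : WProj n a) : ∃ j, y ∈ U n a j := by
  obtain ⟨x, rfl⟩ := isOpenQuotientMap_q.surjective y
  obtain ⟨i, hi⟩ := Function.ne_iff.1 x.2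
  rw [Pi.zero_apply] at hi
  exact ⟨i, mem_U.2 hi⟩

theorem exists_path_inter (j k : Fin (n + 1)) {y : WProj n a} (hj : y ∈ U n a j)
    (hk : y ∈ U n a k) :
    ∃ p : Path (z0 n a) y, (∀ t, p t ∈ U n a j) ∧ (∀ t, p t ∈ U n a k) := by
  have hk' := hk
  obtain ⟨x, hx, rfl⟩ := hj
  obtain ⟨p, hp⟩ := exists_path_from_z0 (a := a) x
  exact ⟨p, fun t => hp t j hx, fun t => hp t k (mem_U.1 hk')⟩

theorem chart_paths_homotopic (ha : ∀ i, 0 < a i) (j : Fin (n + 1)) {x y : WProj n a}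
    (p₁ p₂ : Path x y) (h₁ : ∀ t, p₁ t ∈ U n a j) (h₂ : ∀ t, p₂ t ∈ U n a j) :
    Path.Homotopic p₁ p₂ := by
  have hx : x ∈ U n a j := p₁.source ▸ h₁ 0
  have hy : y ∈ U n a j := p₁.target ▸ h₁ 1
  haveI := contractibleSpace_U (n := n) (a := a) j (ha j)
  have hh := SimplyConnectedSpace.paths_homotopic (X := ↥(U n a j))
      (corestrict _ p₁ h₁ hx hy) (corestrict _ p₂ h₂ hx hy)
  have hmap := Path.Homotopic.map hh
    (⟨Subtype.val, continuous_subtype_val⟩ : C(↥(U n a j), WProj n a))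
  simpa [corestrict_map] using hmap

theorem path_trans_mem {T : Type*} [TopologicalSpace T] {S : Set T} {x y z : T}
    {A : Path x y} {C : Path y z} (hA : ∀ t, A t ∈ S) (hC : ∀ t, C t ∈ S) :
    ∀ t, (A.trans C) t ∈ S := by
  intro t
  rw [Path.trans_apply]
  split_ifs <;> [exact hA _; exact hC _]

theorem path_symm_mem {T : Type*} [TopologicalSpace T] {S : Set T} {x y : T}
    {A : Path x y} (hA : ∀ t, A t ∈ S) : ∀ t, (A.symm) t ∈ S := fun t => hA _

/-- subdivision points -/
noncomputable def tt (N i : ℕ) : I :=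
  ⟨min ((i : ℝ) / (N : ℝ)) 1, ⟨le_min (by positivity) zero_le_one, min_le_right _ _⟩⟩

theorem tt_zero (N : ℕ) : tt N 0 = 0 := by
  apply Subtype.ext
  simp only [tt, Nat.cast_zero, zero_div, Icc.coe_zero]
  exact min_eq_left zero_le_one

theorem tt_last {N : ℕ} (hN : 0 < N) : tt N N = 1 := by
  apply Subtype.ext
  have : (N : ℝ) ≠ 0 := Nat.cast_ne_zero.2 hN.ne'
  simp only [tt, div_self this, Icc.coe_one]
  exact min_self 1

theorem tt_mono {N : ℕ} (i : ℕ) : (tt N i).1 ≤ (tt N (i + 1)).1 := by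
  apply min_le_min _ le_rfl
  rw [div_eq_mul_inv, div_eq_mul_inv]
  exact mul_le_mul_of_nonneg_right (by push_cast; linarith)
    (inv_nonneg.2 (Nat.cast_nonneg N))

theorem tt_pos {N i : ℕ} (hN : 0 < N) (hi : 1 ≤ i) : 0 < (tt N i).1 := by
  apply lt_min _ one_pos
  have h1 : (0:ℝ) < (N:ℝ) := Nat.cast_pos.2 hN
  have h2 : (1:ℝ) ≤ (i:ℝ) := by exact_mod_cast hi
  positivity

theorem tt_diff {N : ℕ} (hN : 0 < N) (i : ℕ) :
    (tt N (i + 1)).1 - (tt N i).1 ≤ 1 / (N : ℝ) := by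
  have hNR : (0:ℝ) < (N : ℝ) := Nat.cast_pos.2 hN
  have hd : ((i : ℝ) + 1) / (N:ℝ) - (i:ℝ) / (N:ℝ) = 1 / (N:ℝ) := by
    field_simp
    ring
  have hab : (i : ℝ) / (N:ℝ) ≤ ((i:ℝ) + 1) / (N:ℝ) := by gcongr; linarith
  have h1N : (0:ℝ) < 1 / (N:ℝ) := by positivity
  simp only [tt, Nat.cast_add, Nat.cast_one, min_def]
  split_ifs <;> linarith

/-- Main caterpillar lemma: every loop at the basepoint is nullhomotopic. -/
theorem loop_nullhomotopic (ha : ∀ i, 0 < a i) (p : Path (z0 n a) (z0 n a)) :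
    (⟦p⟧ : Path.Homotopic.Quotient _ _) = ⟦Path.refl (z0 n a)⟧ := by
  classical
  -- Lebesgue number for the chart cover
  obtain ⟨δ, hδ, hlb⟩ := lebesgue_number_lemma_of_metric (isCompact_univ (X := I))
    (fun j : Fin (n + 1) => (isOpen_U j).preimage p.continuous)
    (fun t _ => by
      obtain ⟨j, hj⟩ := exists_chart (p t)
      exact Set.mem_iUnion.2 ⟨j, hj⟩)
  obtain ⟨N', hN'⟩ := exists_nat_one_div_lt hδ
  set N := N' + 1 with hNdef
  have hN : 0 < N := Nat.succ_pos _
  have hNδ : 1 / (N : ℝ) < δ := by exact_mod_cast hN'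
  have hjj : ∀ k : ℕ, ∃ j : Fin (n + 1), Metric.ball (tt N k) δ ⊆ ⇑p ⁻¹' (U n a j) :=
    fun k => hlb (tt N k) trivial
  choose jj hjj using hjj
  -- all points of piece `k` lie in chart `jj k`
  have hpieceU : ∀ (k : ℕ) (s : I), p (affI (tt N k) (tt N (k + 1)) s) ∈ U n a (jj k) := by
    intro k s
    apply hjj k
    rw [Metric.mem_ball, Subtype.dist_eq, Real.dist_eq]
    have hmono := tt_mono (N := N) k
    have hdiff := tt_diff hN k
    have hs0 := s.2.1
    have hs1 := s.2.2
    have hval : (affI (tt N k) (tt N (k + 1)) s).1 - (tt N k).1 =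
        s.1 * ((tt N (k + 1)).1 - (tt N k).1) := by
      simp only [affI]; ring
    rw [abs_of_nonneg (by nlinarith)]
    nlinarith
  -- membership of endpoints
  have hend : ∀ k : ℕ, p (tt N (k + 1)) ∈ U n a (jj k) := by
    intro k
    have := hpieceU k 1
    rwa [affI_one] at this
  have hstart : ∀ k : ℕ, p (tt N k) ∈ U n a (jj k) := by
    intro k
    have := hpieceU k 0
    rwa [affI_zero] at this
  -- choose connector paths
  have hBex : ∀ i : ℕ, ∃ B : Path (z0 n a) (p (tt N i)),
      (1 ≤ i → i + 1 ≤ N → (∀ t, B t ∈ U n a (jj (i - 1))) ∧ (∀ t, B t ∈ U n a (jj i))) := by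
    intro i
    by_cases hi : 1 ≤ i ∧ i + 1 ≤ N
    · obtain ⟨hi1, hi2⟩ := hi
      have h1 : p (tt N i) ∈ U n a (jj (i - 1)) := by
        have := hend (i - 1)
        rwa [Nat.sub_add_cancel hi1] at this
      obtain ⟨B, hB1, hB2⟩ := exists_path_inter (jj (i - 1)) (jj i) h1 (hstart i)
      exact ⟨B, fun _ _ => ⟨hB1, hB2⟩⟩
    · obtain ⟨j₀, hj₀⟩ := exists_chart (p (tt N i))
      obtain ⟨B, hB1, _⟩ := exists_path_inter j₀ j₀ hj₀ hj₀
      exact ⟨B, fun h1 h2 => absurd ⟨h1, h2⟩ hi⟩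
  choose B hB using hBex
  -- the inductive claim
  have claim : ∀ m : ℕ, m + 2 ≤ N →
      (⟦headPath p (tt N (m + 1))⟧ : Path.Homotopic.Quotient _ _) = ⟦B (m + 1)⟧ := by
    intro m
    induction m with
    | zero =>
      intro hm
      apply Quotient.sound
      have hhead : ∀ t, (headPath p (tt N 1)) t ∈ U n a (jj 0) := by
        intro t
        rw [headPath_apply, ← tt_zero N]
        exact hpieceU 0 t
      have hB1 := hB 1 le_rfl (by omega)
      exact chart_paths_homotopic ha (jj 0) _ _ hhead (by simpa using hB1.1)
    | succ k ih =>
      intro hm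
      have ihk := ih (by omega)
      -- split the head path
      have hsplit := head_split p (tt N (k + 1)) (tt N (k + 2)) (tt_mono (k + 1))
        (tt_pos hN (by omega))
      have hpiece : Path.Homotopic (subPath p (tt N (k + 1)) (tt N (k + 2)))
          ((B (k + 1)).symm.trans (B (k + 2))) := by
        apply chart_paths_homotopic ha (jj (k + 1))
        · intro t; exact hpieceU (k + 1) t
        · apply path_trans_mem
          · exact path_symm_mem (hB (k + 1) (by omega) (by omega)).2
          · have := (hB (k + 2) (by omega) (by omega)).1
            simpa using this
      have hcomb : Path.Homotopic (headPath p (tt N (k + 2)))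
          ((B (k + 1)).trans ((B (k + 1)).symm.trans (B (k + 2)))) :=
        hsplit.trans (Path.Homotopic.hcomp (Quotient.exact ihk) hpiece)
      exact Quotient.sound (hcomb.trans (trans_symm_cancel _ _))
  -- endgame
  rcases Nat.lt_or_ge N 2 with hN2 | hN2
  · -- N = 1 : the whole loop lies in one chart
    have hN1 : N = 1 := by omega
    apply Quotient.sound
    apply chart_paths_homotopic ha (jj 0)
    · intro t
      have := hpieceU 0 ⟨t, t.2⟩
      have haff : affI (tt N 0) (tt N 1) ⟨t.1, t.2⟩ = t := by
        apply Subtype.ext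
        rw [hN1]
        simp [affI, tt]
      rwa [haff] at this
    · intro t
      exact z0_mem_U (jj 0)
  · -- N ≥ 2
    have hkey := claim (N - 2) (by omega)
    have hNN : N - 2 + 1 = N - 1 := by omega
    rw [hNN] at hkey
    have hfull := full_split p (tt N (N - 1))
    have hlast : Path.Homotopic (lastPath p (tt N (N - 1))) ((B (N - 1)).symm) := by
      apply chart_paths_homotopic ha (jj (N - 1))
      · intro t
        have haff : affI (tt N (N - 1)) 1 t = affI (tt N (N - 1)) (tt N (N - 1 + 1)) t := by
          rw [show N - 1 + 1 = N from by omega, tt_last hN]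
        rw [lastPath_apply, haff]
        exact hpieceU (N - 1) t
      · exact path_symm_mem (hB (N - 1) (by omega) (by omega)).2
    have hcomb : Path.Homotopic p ((B (N - 1)).trans ((B (N - 1)).symm)) :=
      hfull.trans (Path.Homotopic.hcomp (Quotient.exact hkey) hlast)
    exact Quotient.sound (hcomb.trans ⟨(Path.Homotopy.reflTransSymm _).symm⟩)


theorem joined_z0 (y : WProj n a) : Joined (z0 n a) y := by
  obtain ⟨j, hj⟩ := exists_chart y
  obtain ⟨p, _, _⟩ := exists_path_inter j j hj hj
  exact ⟨p⟩

open CategoryTheory in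
theorem quotient_subsingleton (ha : ∀ i, 0 < a i) (x y : WProj n a) :
    Subsingleton (Path.Homotopic.Quotient x y) := by
  constructor
  intro f g
  let X : FundamentalGroupoid (WProj n a) := ⟨x⟩
  let Y : FundamentalGroupoid (WProj n a) := ⟨y⟩
  let Z : FundamentalGroupoid (WProj n a) := ⟨z0 n a⟩
  have hloop : ∀ e : Z ⟶ Z, e = 𝟙 Z := fun e =>
    Quotient.inductionOn e fun L => loop_nullhomotopic ha L
  obtain ⟨cx⟩ := joined_z0 (a := a) x
  let h : Z ⟶ X := ⟦cx⟧
  let f' : X ⟶ Y := f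
  let g' : X ⟶ Y := g
  have key : (h ≫ f') ≫ Groupoid.inv (h ≫ g') = 𝟙 Z := hloop _
  have h2 : h ≫ f' = h ≫ g' := by
    calc h ≫ f' = ((h ≫ f') ≫ Groupoid.inv (h ≫ g')) ≫ (h ≫ g') := by
          rw [Category.assoc, Groupoid.inv_comp, Category.comp_id]
      _ = 𝟙 Z ≫ (h ≫ g') := by rw [key]
      _ = h ≫ g' := Category.id_comp _
  have h3 : f' = g' := by
    have := congrArg (fun e => Groupoid.inv h ≫ e) h2
    simpa only [← Category.assoc, Groupoid.inv_comp, Category.id_comp] using this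
  exact h3

end WProjAux

/-- Every weighted projective space `ℙ(a₀,…,aₙ)` (with positive weights,
`n ≥ 1`) is simply connected. -/
theorem wproj_simplyConnected
    (n : ℕ) (hn : 1 ≤ n) (a : Fin (n + 1) → ℕ) (ha : ∀ i, 0 < a i) :
    SimplyConnectedSpace (WProj n a) := by
  rw [simply_connected_iff_paths_homotopic]
  constructor
  · exact ⟨⟨WProjAux.z0 n a⟩,
      fun x y => ((WProjAux.joined_z0 x).symm.trans (WProjAux.joined_z0 y))⟩
  · exact WProjAux.quotient_subsingleton ha
end

section
/- Let r ≥ 1 and let A be an invertible 3 × 3 complex matrix such that: (i) the image of A in PGL₃(ℂ) has order exactly r, i.e. the least k ≥ 1 for which Aᵏ is a scalar matrix is k = r; and (ii) the set of points p ∈ ℙ²(ℂ) for which there exists k with 1 ≤ k < r such that the projective transformation induced by Aᵏ fixes p is finite. Then there exist a primitive r-th root of unity ε, an integer a with gcd(a, r) = 1 and gcd(a + 1, r) = 1, an invertible matrix P ∈ GL₃(ℂ), and a nonzero scalar c ∈ ℂ*, such that P A P⁻¹ = c · diag(1, ε^{a}, ε^{a+1}). -/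
/-- The scalar equivalence on `ℂ³ \ {0}`. -/
def projRel3 (x y : {v : Fin 3 → ℂ // v ≠ 0}) : Prop :=
  ∃ t : ℂ, t ≠ 0 ∧ ∀ i, (y : Fin 3 → ℂ) i = t * (x : Fin 3 → ℂ) i

/-- The complex projective plane `ℙ²(ℂ)`, as the quotient topological space of
`ℂ³ \ {0}` by scalar multiplication. -/
def P2 : Type := Quot projRel3

instance : TopologicalSpace P2 := inferInstanceAs (TopologicalSpace (Quot projRel3))

/-- The projective transformation of `ℙ²(ℂ)` induced by the invertible matrix `B` fixes
the point `p`: some (equivalently any) representative of `p` is an eigenvector of `B`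
with nonzero eigenvalue. -/
def projFixes (B : Matrix (Fin 3) (Fin 3) ℂ) (p : P2) : Prop :=
  ∃ (x : {v : Fin 3 → ℂ // v ≠ 0}) (t : ℂ), t ≠ 0 ∧ Quot.mk projRel3 x = p ∧
    B.mulVec (x : Fin 3 → ℂ) = t • (x : Fin 3 → ℂ)

lemma projRel3_of_quot_eq {x y : {v : Fin 3 → ℂ // v ≠ 0}}
    (h : Quot.mk projRel3 x = Quot.mk projRel3 y) : projRel3 x y := by
  have h' := Quot.eq.mp h
  clear h
  induction h' with
  | rel a b hab => exact hab
  | refl a => exact ⟨1, one_ne_zero, fun i => (one_mul _).symm⟩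
  | symm a b hab ih =>
      obtain ⟨t, ht, hh⟩ := ih
      exact ⟨t⁻¹, inv_ne_zero ht, fun i => by rw [hh i]; field_simp⟩
  | trans a b c hab hbc ih1 ih2 =>
      obtain ⟨t, ht, h1⟩ := ih1
      obtain ⟨u, hu, h2⟩ := ih2
      exact ⟨u * t, mul_ne_zero hu ht, fun i => by rw [h2 i, h1 i]; ring⟩

lemma isPrimitiveRoot_of_pows {r : ℕ} (hr : 1 ≤ r) {z : ℂ} (h1 : z ^ r = 1)
    (h2 : ∀ k, 1 ≤ k → k < r → z ^ k ≠ 1) : IsPrimitiveRoot z r := by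
  refine ⟨h1, fun l hl => ?_⟩
  by_contra hdvd
  have hm : l % r ≠ 0 := fun h => hdvd (Nat.dvd_of_mod_eq_zero h)
  have hlt : l % r < r := Nat.mod_lt _ hr
  refine h2 (l % r) (Nat.one_le_iff_ne_zero.mpr hm) hlt ?_
  calc z ^ (l % r) = z ^ (l % r) * (z ^ r) ^ (l / r) := by rw [h1, one_pow, mul_one]
    _ = z ^ (l % r + r * (l / r)) := by rw [pow_add, pow_mul]
    _ = z ^ l := by rw [Nat.mod_add_div]
    _ = 1 := hl

lemma end_pow_eig {f : Module.End ℂ (Fin 3 → ℂ)} {v : Fin 3 → ℂ} {μ : ℂ}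
    (h : f v = μ • v) (k : ℕ) : (f ^ k) v = μ ^ k • v := by
  induction k with
  | zero => simp
  | succ n ih =>
      rw [pow_succ, Module.End.mul_apply, h, map_smul, ih, smul_smul, pow_succ, mul_comm]

lemma matrix_pow_mulVec_eig {A : Matrix (Fin 3) (Fin 3) ℂ} {v : Fin 3 → ℂ} {μ : ℂ}
    (h : A.mulVec v = μ • v) (k : ℕ) : (A ^ k).mulVec v = μ ^ k • v := by
  have hf : Matrix.toLinAlgEquiv' A v = μ • v := by
    rw [Matrix.toLinAlgEquiv'_apply]; exact h
  have := end_pow_eig hf k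
  rw [← map_pow] at this
  rw [← Matrix.toLinAlgEquiv'_apply]
  exact this

lemma smul_cancel_of_ne_zero {v : Fin 3 → ℂ} (hv : v ≠ 0) {a b : ℂ}
    (h : a • v = b • v) : a = b := by
  by_contra hab
  have : (a - b) • v = 0 := by rw [sub_smul, h, sub_self]
  rcases smul_eq_zero.mp this with h' | h'
  · exact hab (sub_eq_zero.mp h')
  · exact hv h'

lemma exists_eigenbasis {r : ℕ} (hr : 1 ≤ r) (A : Matrix (Fin 3) (Fin 3) ℂ) {c : ℂ} (hcne : c ≠ 0)
    (hc : A ^ r = c • 1) :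
    ∃ (B : Module.Basis (Fin 3) ℂ (Fin 3 → ℂ)) (μf : Fin 3 → ℂ),
      ∀ i, A.mulVec (B i) = μf i • B i := by
  set f : Module.End ℂ (Fin 3 → ℂ) := Matrix.toLinAlgEquiv' A with hf
  have hfapp : ∀ x, f x = A.mulVec x := fun x => Matrix.toLinAlgEquiv'_apply A x
  have haev : (Polynomial.aeval f) (Polynomial.X ^ r - Polynomial.C c) = 0 := by
    have : (Polynomial.aeval A) (Polynomial.X ^ r - Polynomial.C c) = 0 := by
      simp [Polynomial.aeval_X_pow, hc, Algebra.algebraMap_eq_smul_one]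
    rw [hf]
    have h2 : Matrix.toLinAlgEquiv' A = Matrix.toLinAlgEquiv'.toAlgHom A := rfl
    rw [h2, Polynomial.aeval_algHom_apply, this, map_zero]
  have hsq : Squarefree (Polynomial.X ^ r - Polynomial.C c) :=
    (Polynomial.separable_X_pow_sub_C c (Nat.cast_ne_zero.mpr (by omega)) hcne).squarefree
  have hss := (Module.End.isSemisimple_of_squarefree_aeval_eq_zero hsq haev).isFinitelySemisimple
  have htop : ⨆ μ : ℂ, f.eigenspace μ = ⊤ := by
    have h1 := Module.End.iSup_maxGenEigenspace_eq_top f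
    simp_rw [hss.maxGenEigenspace_eq_eigenspace] at h1
    exact h1
  set S : Set (Fin 3 → ℂ) := {w | ∃ μ : ℂ, f w = μ • w} with hS
  have hspan : Submodule.span ℂ S = ⊤ := by
    rw [← top_le_iff, ← htop]
    refine iSup_le fun μ w hw => Submodule.subset_span ⟨μ, Module.End.mem_eigenspace_iff.mp hw⟩
  obtain ⟨b, hbS, hbspan, hbli⟩ := exists_linearIndependent ℂ S
  rw [hspan] at hbspan
  let B0 : Module.Basis b ℂ (Fin 3 → ℂ) := Module.Basis.mk hbli (by rw [Subtype.range_coe, hbspan])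
  haveI : Fintype b := FiniteDimensional.fintypeBasisIndex B0
  have hcard : Fintype.card b = 3 := by
    have := Module.finrank_eq_card_basis B0
    simpa using this.symm
  let e : b ≃ Fin 3 := Fintype.equivFinOfCardEq hcard
  let B : Module.Basis (Fin 3) ℂ (Fin 3 → ℂ) := B0.reindex e
  have hBS : ∀ i, B i ∈ S := by
    intro i
    have : B i = ↑(e.symm i) := by simp [B, B0, Module.Basis.reindex_apply, Module.Basis.mk_apply]
    rw [this]
    exact hbS (e.symm i).2
  choose μf hμf using fun i => hBS i
  exact ⟨B, μf, fun i => by rw [← hfapp]; exact hμf i⟩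

/-- If `A ∈ GL₃(ℂ)` has order exactly `r` in `PGL₃(ℂ)` and the induced
`ℤ/rℤ`-action on `ℙ²(ℂ)` has only finitely many points fixed by some nontrivial power,
then `A` is conjugate to `c · diag(1, ε^a, ε^{a+1})` for some scalar `c ≠ 0`, some
primitive `r`-th root of unity `ε`, and some integer `a` with
`gcd(a, r) = gcd(a+1, r) = 1`. -/
theorem diagonalizable_of_order_r_finite_fixed_locus
    (r : ℕ) (hr : 1 ≤ r) (A : Matrix (Fin 3) (Fin 3) ℂ) (hA : IsUnit A)
    (hAr : ∃ c : ℂ, A ^ r = c • (1 : Matrix (Fin 3) (Fin 3) ℂ))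
    (hAk : ∀ k : ℕ, 1 ≤ k → k < r → ¬∃ c : ℂ, A ^ k = c • (1 : Matrix (Fin 3) (Fin 3) ℂ))
    (hfix : {p : P2 | ∃ k : ℕ, 1 ≤ k ∧ k < r ∧ projFixes (A ^ k) p}.Finite) :
    ∃ (ε : ℂ) (a : ℤ) (P : Matrix (Fin 3) (Fin 3) ℂ) (c : ℂ),
      IsPrimitiveRoot ε r ∧ Int.gcd a r = 1 ∧ Int.gcd (a + 1) r = 1 ∧
      IsUnit P ∧ c ≠ 0 ∧
      P * A * P⁻¹ = c • Matrix.diagonal ![(1 : ℂ), ε ^ a, ε ^ (a + 1)] := by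
  obtain ⟨c, hc⟩ := hAr
  have hcne : c ≠ 0 := by
    intro h0
    have h1 : IsUnit ((A ^ r).det) := (Matrix.isUnit_iff_isUnit_det _).mp (hA.pow r)
    rw [hc, h0, zero_smul] at h1
    simp at h1
  rcases eq_or_lt_of_le hr with hr1 | hr2
  · -- r = 1
    subst hr1
    refine ⟨1, 0, 1, c, IsPrimitiveRoot.one, by simp, by simp, isUnit_one, hcne, ?_⟩
    · have hA1 : A = c • 1 := by rw [← pow_one A, hc]
      have hd : ![(1 : ℂ), (1 : ℂ) ^ (0 : ℤ), (1 : ℂ) ^ ((0 : ℤ) + 1)] = fun _ => (1 : ℂ) := by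
        funext i; fin_cases i <;> norm_num
      rw [hd, Matrix.diagonal_one, inv_one, mul_one, one_mul, hA1]
  · -- r ≥ 2
    obtain ⟨B, μf, hμf⟩ := exists_eigenbasis hr A hcne hc
    have hvne : ∀ i, B i ≠ 0 := fun i => B.ne_zero i
    have hμr : ∀ i, μf i ^ r = c := by
      intro i
      have h1 : (A ^ r).mulVec (B i) = μf i ^ r • B i := matrix_pow_mulVec_eig (hμf i) r
      rw [hc, Matrix.smul_mulVec, Matrix.one_mulVec] at h1
      exact (smul_cancel_of_ne_zero (hvne i) h1).symm
    have hμne : ∀ i, μf i ≠ 0 := by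
      intro i h0
      exact hcne (by rw [← hμr i, h0, zero_pow (by omega)])
    -- pairwise distinct powers
    have hdist : ∀ i j : Fin 3, i ≠ j → ∀ k, 1 ≤ k → k < r → μf i ^ k ≠ μf j ^ k := by
      intro i j hij k hk1 hkr heq
      have keyrepr : ∀ s : ℂ, B.repr (B i + s • B j) = Finsupp.single i 1 + s • Finsupp.single j 1 := by
        intro s
        rw [map_add, map_smul, B.repr_self, B.repr_self]
      have key : ∀ s : ℂ, B i + s • B j ≠ 0 := by
        intro s h0
        have h1 := congrArg (fun g => B.repr g i) h0
        simp only [keyrepr s, map_zero] at h1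
        rw [Finsupp.add_apply, Finsupp.smul_apply, Finsupp.single_apply,
          Finsupp.single_apply, if_pos rfl, if_neg hij.symm, Finsupp.coe_zero] at h1
        simp at h1
      let w : ℂ → {x : Fin 3 → ℂ // x ≠ 0} := fun s => ⟨B i + s • B j, key s⟩
      have hmem : ∀ s : ℂ, Quot.mk projRel3 (w s) ∈
          {p : P2 | ∃ k : ℕ, 1 ≤ k ∧ k < r ∧ projFixes (A ^ k) p} := by
        intro s
        refine ⟨k, hk1, hkr, ⟨w s, μf i ^ k, pow_ne_zero _ (hμne i), rfl, ?_⟩⟩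
        show (A ^ k).mulVec (B i + s • B j) = μf i ^ k • (B i + s • B j)
        rw [Matrix.mulVec_add, Matrix.mulVec_smul, matrix_pow_mulVec_eig (hμf i) k,
          matrix_pow_mulVec_eig (hμf j) k, ← heq, smul_add, smul_comm]
      have hinj : Function.Injective (fun s : ℂ => Quot.mk projRel3 (w s)) := by
        intro s s' hss
        obtain ⟨t, ht, hco⟩ := projRel3_of_quot_eq hss
        have hveq : B i + s' • B j = t • (B i + s • B j) := by
          funext idx
          have := hco idx
          simpa [w] using this
        have h1 := congrArg (fun g => B.repr g i) hveq
        have h2 := congrArg (fun g => B.repr g j) hveq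
        simp only [keyrepr, map_smul] at h1 h2
        rw [Finsupp.add_apply, Finsupp.smul_apply, Finsupp.smul_apply, Finsupp.add_apply,
          Finsupp.smul_apply] at h1 h2
        rw [Finsupp.single_apply, Finsupp.single_apply, if_pos rfl, if_neg hij.symm] at h1
        rw [Finsupp.single_apply, Finsupp.single_apply, if_pos rfl, if_neg hij] at h2
        simp only [smul_eq_mul, mul_zero, add_zero, mul_one, zero_add, mul_zero] at h1 h2
        have ht1 : t = 1 := by linear_combination -h1
        rw [ht1, one_mul] at h2
        exact h2.symm
      exact Set.infinite_of_injective_forall_mem hinj hmem hfix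
    -- ratios are primitive roots
    have hratio_pow : ∀ i j : Fin 3, (μf i / μf j) ^ r = 1 := by
      intro i j
      rw [div_pow, hμr i, hμr j, div_self hcne]
    have hratio_prim : ∀ i j : Fin 3, i ≠ j → IsPrimitiveRoot (μf i / μf j) r := by
      intro i j hij
      refine isPrimitiveRoot_of_pows hr (hratio_pow i j) (fun k hk1 hkr hone => ?_)
      rw [div_pow, div_eq_one_iff_eq (pow_ne_zero _ (hμne j))] at hone
      exact hdist i j hij k hk1 hkr hone
    have hq10 : IsPrimitiveRoot (μf 1 / μf 0) r := hratio_prim 1 0 (by decide)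
    have hq20 : IsPrimitiveRoot (μf 2 / μf 0) r := hratio_prim 2 0 (by decide)
    have hq21 : IsPrimitiveRoot (μf 2 / μf 1) r := hratio_prim 2 1 (by decide)
    have hμne0 : μf 1 / μf 0 ≠ 0 := div_ne_zero (hμne 1) (hμne 0)
    haveI : NeZero r := ⟨by omega⟩
    obtain ⟨m, hmr, hm⟩ := hq10.eq_pow_of_pow_eq_one (hratio_pow 2 0)
    have hmcop : Nat.Coprime m r := (hq10.pow_iff_coprime hr m).mp (hm ▸ hq20)
    have hm1 : 1 ≤ m := by
      rcases Nat.eq_zero_or_pos m with h0 | h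
      · exfalso
        rw [h0, pow_zero] at hm
        have hne : μf 2 ≠ μf 0 := by
          have h2 := hdist 2 0 (by decide) 1 le_rfl hr2
          simpa using h2
        exact hne ((div_eq_one_iff_eq (hμne 0)).mp hm.symm)
      · exact h
    have hms : m = (m - 1) + 1 := (Nat.succ_pred_eq_of_pos hm1).symm
    have key : μf 2 / μf 1 = (μf 2 / μf 0) / (μf 1 / μf 0) := by
      rw [div_div_div_eq, mul_comm (μf 0) (μf 1),
        mul_div_mul_right _ _ (hμne 0)]
    have hxi_eq : μf 2 / μf 1 = (μf 1 / μf 0) ^ (m - 1) := by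
      rw [key, ← hm]
      conv_lhs => rw [hms]
      rw [pow_succ, mul_div_assoc, div_self hμne0, mul_one]
    have hscop : Nat.Coprime (m - 1) r := (hq10.pow_iff_coprime hr (m - 1)).mp (hxi_eq ▸ hq21)
    have hεprim : IsPrimitiveRoot ((μf 1 / μf 0) ^ (m - 1)) r := hq10.pow_of_coprime (m - 1) hscop
    have hεne0 : (μf 1 / μf 0) ^ (m - 1) ≠ 0 := pow_ne_zero _ hμne0
    have hcop : IsCoprime ((m - 1 : ℕ) : ℤ) (r : ℤ) := by
      rw [Int.isCoprime_iff_gcd_eq_one]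
      exact_mod_cast hscop
    obtain ⟨u, w, huw⟩ := hcop
    have hzr : (μf 1 / μf 0) ^ (r : ℤ) = 1 := by
      rw [zpow_natCast]; exact hq10.pow_eq_one
    have hεu : ((μf 1 / μf 0) ^ (m - 1)) ^ (u : ℤ) = μf 1 / μf 0 := by
      have h1 : ((μf 1 / μf 0) ^ (m - 1)) ^ (u : ℤ) = (μf 1 / μf 0) ^ (((m - 1 : ℕ) : ℤ) * u) := by
        rw [← zpow_natCast (μf 1 / μf 0) (m - 1), ← zpow_mul]
      have h2 : ((m - 1 : ℕ) : ℤ) * u = 1 + (r : ℤ) * (-w) := by linarith [huw]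
      rw [h1, h2, zpow_add₀ hμne0, zpow_one, zpow_mul, hzr, one_zpow, mul_one]
    have hεu1 : ((μf 1 / μf 0) ^ (m - 1)) ^ ((u : ℤ) + 1) = μf 2 / μf 0 := by
      rw [zpow_add_one₀ hεne0, hεu, ← pow_succ', ← hms, hm]
    have hgcdu : Int.gcd u r = 1 := by
      rw [← Int.isCoprime_iff_gcd_eq_one]
      exact ⟨((m - 1 : ℕ) : ℤ), w, by linarith [huw]⟩
    have hgcdu1 : Int.gcd (u + 1) r = 1 := by
      rw [← Int.isCoprime_iff_gcd_eq_one]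
      have hmZ : IsCoprime (m : ℤ) (r : ℤ) := by
        rw [Int.isCoprime_iff_gcd_eq_one]
        exact_mod_cast hmcop
      have h1 : IsCoprime ((m : ℤ) + (r : ℤ) * (-w)) (r : ℤ) := hmZ.add_mul_left_left (-w)
      have h2 : (u + 1) * ((m - 1 : ℕ) : ℤ) = (m : ℤ) + (r : ℤ) * (-w) := by
        have h3 : (m : ℤ) = ((m - 1 : ℕ) : ℤ) + 1 := by exact_mod_cast hms
        linarith [huw]
      rw [← h2] at h1
      exact h1.of_mul_left_left
    -- build Q
    let Q : Matrix (Fin 3) (Fin 3) ℂ := Matrix.of fun p q => B q p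
    have hQmat : Q = (Pi.basisFun ℂ (Fin 3)).toMatrix ⇑B := by
      ext p q
      rw [Module.Basis.toMatrix_apply, Pi.basisFun_repr]
      rfl
    have hQinv : Invertible Q := by
      rw [hQmat]; exact (Pi.basisFun ℂ (Fin 3)).invertibleToMatrix B
    have hQ : IsUnit Q := isUnit_of_invertible Q
    have hQdet : IsUnit Q.det := (Matrix.isUnit_iff_isUnit_det Q).mp hQ
    have hAQ : A * Q = Q * Matrix.diagonal μf := by
      ext p q
      have h1 : (A * Q) p q = A.mulVec (B q) p := by
        simp [Matrix.mul_apply, Matrix.mulVec, dotProduct, Q]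
      rw [h1, hμf q, Matrix.mul_diagonal]
      simp [Q, mul_comm]
    have hPA : Q⁻¹ * A * (Q⁻¹)⁻¹ = Matrix.diagonal μf := by
      rw [Matrix.nonsing_inv_nonsing_inv Q hQdet, mul_assoc, hAQ, ← mul_assoc,
        Matrix.nonsing_inv_mul Q hQdet, one_mul]
    have hPunit : IsUnit Q⁻¹ := by
      rw [Matrix.isUnit_iff_isUnit_det, Matrix.det_nonsing_inv, Ring.inverse_eq_inv']
      exact isUnit_iff_ne_zero.mpr (inv_ne_zero (isUnit_iff_ne_zero.mp hQdet))
    refine ⟨(μf 1 / μf 0) ^ (m - 1), u, Q⁻¹, μf 0, hεprim, hgcdu, hgcdu1, hPunit, hμne 0, ?_⟩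
    rw [hPA]
    have hvec : μf = μf 0 • ![(1 : ℂ), ((μf 1 / μf 0) ^ (m - 1)) ^ (u : ℤ),
        ((μf 1 / μf 0) ^ (m - 1)) ^ ((u : ℤ) + 1)] := by
      funext i
      fin_cases i
      · show μf 0 = μf 0 • (1 : ℂ)
        simp
      · show μf 1 = μf 0 • (((μf 1 / μf 0) ^ (m - 1)) ^ (u : ℤ))
        rw [hεu, smul_eq_mul, mul_comm, div_mul_cancel₀ _ (hμne 0)]
      · show μf 2 = μf 0 • (((μf 1 / μf 0) ^ (m - 1)) ^ ((u : ℤ) + 1))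
        rw [hεu1, smul_eq_mul, mul_comm, div_mul_cancel₀ _ (hμne 0)]
    conv_lhs => rw [hvec]
    exact Matrix.diagonal_smul _ _
end
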